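/- Let n ≥ 1, a ≥ 0, r > 0, and let φ : (0,r) → ℝ be a differentiable function satisfying φ'(t) ≤ −(1/n) φ(t)² for all t ∈ (0,r) and lim_{t→0} φ(t) ≤ n a. Then φ(t) ≤ n a / (1 + t a) for all t ∈ (0,r). (This is the Riccati comparison used for tr(Q(t)) = d/dt log det P(t) in the proof of the Jacobian monotonicity, with a = f(x̄)^{1/(n-1)}.) -/

import Mathlib

open MeasureTheory Metric Filter Manifold Set Topology

noncomputable section

/-- The Riccati-type ODE comparison principle used for `tr Q(t) = (d/dt) log det P(t)` in the
proof of the Jacobian monotonicity: if `φ' ≤ −(1/n) φ²` on `(0,r)` and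
`lim_{t→0⁺} φ(t) ≤ n a` with `a ≥ 0`, then `φ(t) ≤ n a / (1 + t a)` on `(0,r)`. -/
theorem riccati_comparison (n : ℕ) (hn : 1 ≤ n) (a : ℝ) (ha : 0 ≤ a) (r : ℝ) (hr : 0 < r)
    (φ φ' : ℝ → ℝ)
    (hderiv : ∀ t ∈ Set.Ioo (0 : ℝ) r, HasDerivAt φ (φ' t) t)
    (hineq : ∀ t ∈ Set.Ioo (0 : ℝ) r, φ' t ≤ -(1 / (n : ℝ)) * φ t ^ 2)
    (L : ℝ) (hlim : Filter.Tendsto φ (nhdsWithin 0 (Set.Ioi (0 : ℝ))) (nhds L))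
    (hL : L ≤ (n : ℝ) * a) :
    ∀ t ∈ Set.Ioo (0 : ℝ) r, φ t ≤ (n : ℝ) * a / (1 + t * a) := by
  have hnpos : (0 : ℝ) < n := by exact_mod_cast hn
  -- φ is nonincreasing on (0, r)
  have hmono : ∀ s t : ℝ, 0 < s → s ≤ t → t < r → φ t ≤ φ s := by
    intro s t hs hst htr
    have hsub : Set.Icc s t ⊆ Set.Ioo (0:ℝ) r := fun x hx =>
      ⟨lt_of_lt_of_le hs hx.1, lt_of_le_of_lt hx.2 htr⟩
    have hder : ∀ x ∈ Set.Icc s t, HasDerivAt φ (φ' x) x := fun x hx => hderiv x (hsub hx)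
    have hcont : ContinuousOn φ (Set.Icc s t) := fun x hx =>
      ((hder x hx).continuousAt).continuousWithinAt
    have hanti := antitoneOn_of_deriv_nonpos (convex_Icc s t) hcont ?_ ?_
    · exact hanti ⟨le_refl s, hst⟩ ⟨hst, le_refl t⟩ hst
    · intro x hx
      rw [interior_Icc] at hx
      exact ((hder x ⟨hx.1.le, hx.2.le⟩).differentiableAt).differentiableWithinAt
    · intro x hx
      rw [interior_Icc] at hx
      have hx' : x ∈ Set.Ioo (0:ℝ) r := hsub ⟨hx.1.le, hx.2.le⟩
      rw [(hderiv x hx').deriv]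
      have h0 : (0:ℝ) ≤ 1 / (n:ℝ) * φ x ^ 2 :=
        mul_nonneg (by positivity) (sq_nonneg (φ x))
      have := hineq x hx'
      linarith
  -- φ s ≤ L for s ∈ (0, r)
  have hLe : ∀ s : ℝ, 0 < s → s < r → φ s ≤ L := by
    intro s hs hsr
    refine ge_of_tendsto hlim ?_
    filter_upwards [Ioo_mem_nhdsGT_of_mem (Set.left_mem_Ico.2 hs)] with u hu
    exact hmono u s hu.1 hu.2.le hsr
  rintro t₀ ⟨ht0, htr⟩
  have h1pos : (0:ℝ) < 1 + t₀ * a := by positivity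
  by_cases hc : φ t₀ ≤ 0
  · exact hc.trans (div_nonneg (by positivity) h1pos.le)
  push_neg at hc
  have hLpos : 0 < L := lt_of_lt_of_le hc (hLe t₀ ht0 htr)
  have hapos : 0 < a := by nlinarith
  -- φ is positive on (0, t₀]
  have hφpos : ∀ s : ℝ, 0 < s → s ≤ t₀ → 0 < φ s := fun s hs hst =>
    lt_of_lt_of_le hc (hmono s t₀ hs hst htr)
  -- key estimate: for every s ∈ (0, t₀), 1/a - s ≤ n / φ t₀ - t₀
  have key : ∀ s : ℝ, 0 < s → s < t₀ → 1 / a - s ≤ (n : ℝ) / φ t₀ - t₀ := by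
    intro s hs hst
    set h : ℝ → ℝ := fun t => (n : ℝ) / φ t - t with hdef
    have hsub : Set.Icc s t₀ ⊆ Set.Ioo (0:ℝ) r := fun x hx =>
      ⟨lt_of_lt_of_le hs hx.1, lt_of_le_of_lt hx.2 htr⟩
    have hderh : ∀ x ∈ Set.Icc s t₀,
        HasDerivAt h ((0 * φ x - (n : ℝ) * φ' x) / φ x ^ 2 - 1) x := by
      intro x hx
      have hx' := hsub hx
      have hφx : φ x ≠ 0 := (hφpos x hx'.1 hx.2).ne'
      exact ((hasDerivAt_const x (n : ℝ)).div (hderiv x hx') hφx).sub (hasDerivAt_id x)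
    have hcont : ContinuousOn h (Set.Icc s t₀) := fun x hx =>
      ((hderh x hx).continuousAt).continuousWithinAt
    have hmonoh := monotoneOn_of_deriv_nonneg (convex_Icc s t₀) hcont ?_ ?_
    · have := hmonoh ⟨le_refl s, hst.le⟩ ⟨hst.le, le_refl t₀⟩ hst.le
      have hφs : φ s ≤ (n : ℝ) * a := (hLe s hs (hst.trans htr)).trans hL
      have hφspos := hφpos s hs hst.le
      have hns : 1 / a ≤ (n : ℝ) / φ s := by
        rw [div_le_div_iff₀ hapos hφspos]
        linarith
      simp only [hdef] at this
      linarith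
    · intro x hx
      rw [interior_Icc] at hx
      exact ((hderh x ⟨hx.1.le, hx.2.le⟩).differentiableAt).differentiableWithinAt
    · intro x hx
      rw [interior_Icc] at hx
      have hxm : x ∈ Set.Icc s t₀ := ⟨hx.1.le, hx.2.le⟩
      have hx' := hsub hxm
      rw [(hderh x hxm).deriv]
      have hiq := hineq x hx'
      have hφx := hφpos x hx'.1 hxm.2
      rw [sub_nonneg, le_div_iff₀ (by positivity)]
      have hmul := mul_le_mul_of_nonneg_left hiq hnpos.le
      have e : (n:ℝ) * (-(1 / (n:ℝ)) * φ x ^ 2) = -φ x ^ 2 := by field_simp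
      rw [e] at hmul
      linarith
  -- take s → 0 : 1/a + t₀ ≤ n / φ t₀
  have key2 : 1 / a + t₀ ≤ (n : ℝ) / φ t₀ := by
    have : ∀ ε : ℝ, 0 < ε → 1 / a + t₀ ≤ (n : ℝ) / φ t₀ + ε := by
      intro ε hε
      have hsp : 0 < min ε t₀ / 2 := by positivity
      have h2 : min ε t₀ ≤ ε := min_le_left _ _
      have h3 : min ε t₀ ≤ t₀ := min_le_right _ _
      have hst : min ε t₀ / 2 < t₀ := by linarith
      have := key (min ε t₀ / 2) hsp hst
      linarith
    exact le_of_forall_pos_le_add this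
  rw [le_div_iff₀ h1pos]
  have hmul := mul_le_mul_of_nonneg_right key2 (le_of_lt (mul_pos hapos hc))
  have e1 : (1 / a + t₀) * (a * φ t₀) = φ t₀ + t₀ * a * φ t₀ := by field_simp
  have e2 : ((n : ℝ) / φ t₀) * (a * φ t₀) = (n : ℝ) * a := by field_simp
  rw [e1, e2] at hmul
  have e3 : φ t₀ * (1 + t₀ * a) = φ t₀ + t₀ * a * φ t₀ := by ring
  rw [e3]
  exact hmul
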